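/- arXiv:0909.0567 — 2 statements merged into one kernel-verified Lean document; each statement's English description precedes it below -/
import Mathlib

section
/- Let γ > 0. Suppose η : (0,∞) → ℝ is differentiable with ∫₀¹ η(t)² dt < ∞, and x ↦ c(x)η'(x) is differentiable with (c(x)η'(x))' = γ·η(x) for every x ∈ (0,1]. Then for all x, x₀ with 0 < x ≤ x₀ ≤ 1: |η(x) − η(x₀) + c(x₀)η'(x₀)·ν_{x₀}(x)| ≤ γ·(∫₀¹ η(t)² dt)^{1/2}·(x₀ − x)^{1/2}·ν_{x₀}(x), where ν_{x₀}(x) = ∫ₓ^{x₀} c(s)⁻¹ ds. -/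
open MeasureTheory Filter Set Topology

lemma cs_aux (η : ℝ → ℝ) (s t : ℝ) (hst : s ≤ t) (hcont : ContinuousOn η (Icc s t)) :
    |∫ u in s..t, η u| ≤ Real.sqrt (∫ u in Ioc s t, η u ^ 2) * Real.sqrt (t - s) := by
  haveI : IsFiniteMeasure (volume.restrict (Ioc s t)) := by
    constructor
    simp [Real.volume_Ioc]
  obtain ⟨C, hC⟩ := (isCompact_Icc (a := s) (b := t)).exists_bound_of_continuousOn hcont
  have hmeas : AEStronglyMeasurable η (volume.restrict (Ioc s t)) :=
    (hcont.mono Ioc_subset_Icc_self).aestronglyMeasurable measurableSet_Ioc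
  have hmem : MemLp η 2 (volume.restrict (Ioc s t)) := by
    refine MemLp.of_bound hmeas C ?_
    filter_upwards [ae_restrict_mem measurableSet_Ioc] with u hu
    exact hC u (Ioc_subset_Icc_self hu)
  have hone : MemLp (fun _ : ℝ => (1:ℝ)) 2 (volume.restrict (Ioc s t)) := memLp_const 1
  have hpq : Real.HolderConjugate 2 2 := Real.HolderConjugate.two_two
  have h := MeasureTheory.integral_mul_norm_le_Lp_mul_Lq (μ := volume.restrict (Ioc s t))
    hpq (by simpa using hmem) (by simpa using hone)
  simp only [norm_one, mul_one] at h
  have h2 : ∀ a : ℝ, ‖η a‖ ^ (2:ℝ) = η a ^ 2 := by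
    intro a
    rw [show (2:ℝ) = ((2:ℕ):ℝ) by norm_num, Real.rpow_natCast, Real.norm_eq_abs, sq_abs]
  simp only [h2, Real.one_rpow] at h
  have hvol : ∫ (_ : ℝ) in Ioc s t, (1:ℝ) = t - s := by
    simp [Real.volume_Ioc, ENNReal.toReal_ofReal (sub_nonneg.mpr hst), hst]
  rw [hvol] at h
  have habs : |∫ u in s..t, η u| ≤ ∫ u in Ioc s t, ‖η u‖ := by
    rw [intervalIntegral.integral_of_le hst]
    exact norm_integral_le_integral_norm η
  refine habs.trans (h.trans ?_)
  rw [← Real.sqrt_eq_rpow, ← Real.sqrt_eq_rpow]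

/-- Paper: estimate from Remark 2.11, controlling the small-x behaviour of the
deficiency solution η_γ. -/
theorem stmt_16 (c : ℝ → ℝ)
    (hc_cont : ContinuousOn c (Set.Ioi 0))
    (hc_pos : ∀ x > (0:ℝ), 0 < c x)
    (γ : ℝ) (hγ : 0 < γ)
    (η : ℝ → ℝ)
    (hη_diff : ∀ x > (0:ℝ), DifferentiableAt ℝ η x)
    (hη_L2 : MeasureTheory.IntegrableOn (fun t => (η t) ^ 2) (Set.Ioc 0 1))
    (hode : ∀ x ∈ Set.Ioc (0:ℝ) 1,
      HasDerivAt (fun y => c y * deriv η y) (γ * η x) x) :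
    ∀ x x₀ : ℝ, 0 < x → x ≤ x₀ → x₀ ≤ 1 →
      |η x - η x₀ + c x₀ * deriv η x₀ * ∫ s in x..x₀, (c s)⁻¹|
        ≤ γ * Real.sqrt (∫ t in Set.Ioc (0:ℝ) 1, (η t) ^ 2)
          * Real.sqrt (x₀ - x) * ∫ s in x..x₀, (c s)⁻¹ := by
  intro x x₀ hx hxx₀ hx₀1
  set I : ℝ := ∫ t in Set.Ioc (0:ℝ) 1, (η t) ^ 2 with hIdef
  have hIccsub : Icc x x₀ ⊆ Ioc (0:ℝ) 1 := fun s hs => ⟨lt_of_lt_of_le hx hs.1, hs.2.trans hx₀1⟩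
  have hIoi : Icc x x₀ ⊆ Ioi (0:ℝ) := fun s hs => lt_of_lt_of_le hx hs.1
  have hcne : ∀ s ∈ Icc x x₀, c s ≠ 0 := fun s hs => (hc_pos s (hIoi hs)).ne'
  set w : ℝ → ℝ := fun y => c y * deriv η y with hwdef
  have hxmem : x ∈ Icc x x₀ := ⟨le_refl x, hxx₀⟩
  have hx₀mem : x₀ ∈ Icc x x₀ := ⟨hxx₀, le_refl x₀⟩
  have huIcc0 : uIcc x x₀ = Icc x x₀ := uIcc_of_le hxx₀
  have hwcont : ContinuousOn w (Icc x x₀) := fun s hs =>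
    ((hode s (hIccsub hs)).continuousAt).continuousWithinAt
  have hccont : ContinuousOn c (Icc x x₀) := hc_cont.mono hIoi
  have hcinv : ContinuousOn (fun s => (c s)⁻¹) (Icc x x₀) := hccont.inv₀ hcne
  have hηcont : ∀ s t : ℝ, s ∈ Icc x x₀ → ContinuousOn η (Icc s x₀) := by
    intro s t hs u hu
    exact ((hη_diff u (lt_of_lt_of_le hx (hs.1.trans hu.1))).continuousAt).continuousWithinAt
  -- Step A: FTC for w
  have hA : ∀ s ∈ Icc x x₀, w x₀ - w s = γ * ∫ t in s..x₀, η t := by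
    intro s hs
    have hder : ∀ t ∈ uIcc s x₀, HasDerivAt w (γ * η t) t := by
      intro t ht
      rw [uIcc_of_le hs.2] at ht
      exact hode t (hIccsub ⟨hs.1.trans ht.1, ht.2⟩)
    have hint : IntervalIntegrable (fun t => γ * η t) volume s x₀ := by
      apply ContinuousOn.intervalIntegrable
      rw [uIcc_of_le hs.2]
      exact continuousOn_const.mul (hηcont s s hs)
    have h := intervalIntegral.integral_eq_sub_of_hasDerivAt hder hint
    rw [intervalIntegral.integral_const_mul] at h
    exact h.symm
  -- deriv η = w * c⁻¹ on the interval
  have hderiv_eq : ∀ s ∈ Icc x x₀, deriv η s = w s * (c s)⁻¹ := by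
    intro s hs
    show deriv η s = c s * deriv η s * (c s)⁻¹
    rw [mul_comm (c s), mul_assoc, mul_inv_cancel₀ (hcne s hs), mul_one]
  have hηderiv_cont : ContinuousOn (deriv η) (Icc x x₀) :=
    (hwcont.mul hcinv).congr hderiv_eq
  -- Step B: FTC for η
  have hB : ∫ s in x..x₀, deriv η s = η x₀ - η x := by
    apply intervalIntegral.integral_eq_sub_of_hasDerivAt
    · intro s hs
      rw [huIcc0] at hs
      exact (hη_diff s (hIoi hs)).hasDerivAt
    · apply ContinuousOn.intervalIntegrable
      rw [huIcc0]; exact hηderiv_cont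
  -- integrability facts
  have hint1 : IntervalIntegrable (fun s => w x₀ * (c s)⁻¹) volume x x₀ := by
    apply ContinuousOn.intervalIntegrable
    rw [huIcc0]; exact continuousOn_const.mul hcinv
  have hint2 : IntervalIntegrable (fun s => w s * (c s)⁻¹) volume x x₀ := by
    apply ContinuousOn.intervalIntegrable
    rw [huIcc0]; exact hwcont.mul hcinv
  have hintcinv : IntervalIntegrable (fun s => (c s)⁻¹) volume x x₀ := by
    apply ContinuousOn.intervalIntegrable
    rw [huIcc0]; exact hcinv
  -- Step C: the key identity
  have hC : η x - η x₀ + w x₀ * ∫ s in x..x₀, (c s)⁻¹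
      = ∫ s in x..x₀, (w x₀ - w s) * (c s)⁻¹ := by
    have h1 : (∫ s in x..x₀, (w x₀ - w s) * (c s)⁻¹)
        = (∫ s in x..x₀, w x₀ * (c s)⁻¹) - ∫ s in x..x₀, w s * (c s)⁻¹ := by
      rw [← intervalIntegral.integral_sub hint1 hint2]
      apply intervalIntegral.integral_congr
      intro s _
      ring
    have h2 : (∫ s in x..x₀, w x₀ * (c s)⁻¹) = w x₀ * ∫ s in x..x₀, (c s)⁻¹ :=
      intervalIntegral.integral_const_mul _ _
    have h3 : (∫ s in x..x₀, w s * (c s)⁻¹) = η x₀ - η x := by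
      rw [← hB]
      apply intervalIntegral.integral_congr
      intro s hs
      rw [huIcc0] at hs
      exact (hderiv_eq s hs).symm
    rw [h1, h2, h3]; ring
  -- Step D: pointwise bound
  set M : ℝ := γ * Real.sqrt I * Real.sqrt (x₀ - x) with hMdef
  have hM : 0 ≤ M := by
    apply mul_nonneg (mul_nonneg hγ.le (Real.sqrt_nonneg _)) (Real.sqrt_nonneg _)
  have hbound : ∀ s ∈ Icc x x₀, |(w x₀ - w s) * (c s)⁻¹| ≤ M * (c s)⁻¹ := by
    intro s hs
    have hcinv_pos : 0 < (c s)⁻¹ := inv_pos.mpr (hc_pos s (hIoi hs))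
    rw [abs_mul, abs_of_pos hcinv_pos]
    apply mul_le_mul_of_nonneg_right _ hcinv_pos.le
    rw [hA s hs, abs_mul, abs_of_pos hγ]
    have hcs := cs_aux η s x₀ hs.2 (hηcont s s hs)
    have hmono : (∫ u in Ioc s x₀, η u ^ 2) ≤ I := by
      rw [hIdef]
      apply setIntegral_mono_set hη_L2
      · filter_upwards with t using sq_nonneg (η t)
      · exact HasSubset.Subset.eventuallyLE (fun t ht => ⟨lt_of_lt_of_le hx (hs.1.trans ht.1.le), ht.2.trans hx₀1⟩)
    have hsq1 : Real.sqrt (∫ u in Ioc s x₀, η u ^ 2) ≤ Real.sqrt I := Real.sqrt_le_sqrt hmono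
    have hsq2 : Real.sqrt (x₀ - s) ≤ Real.sqrt (x₀ - x) := Real.sqrt_le_sqrt (by linarith [hs.1])
    calc γ * |∫ t in s..x₀, η t|
        ≤ γ * (Real.sqrt (∫ u in Ioc s x₀, η u ^ 2) * Real.sqrt (x₀ - s)) := by
          exact mul_le_mul_of_nonneg_left hcs hγ.le
      _ ≤ γ * (Real.sqrt I * Real.sqrt (x₀ - x)) := by
          apply mul_le_mul_of_nonneg_left _ hγ.le
          exact mul_le_mul hsq1 hsq2 (Real.sqrt_nonneg _) (Real.sqrt_nonneg _)
      _ = M := by rw [hMdef]; ring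
  -- assemble
  have habs : |∫ s in x..x₀, (w x₀ - w s) * (c s)⁻¹| ≤ ∫ s in x..x₀, |(w x₀ - w s) * (c s)⁻¹| :=
    intervalIntegral.abs_integral_le_integral_abs hxx₀
  have hC' : η x - η x₀ + c x₀ * deriv η x₀ * ∫ s in x..x₀, (c s)⁻¹
      = ∫ s in x..x₀, (w x₀ - w s) * (c s)⁻¹ := hC
  have hmono2 : (∫ s in x..x₀, |(w x₀ - w s) * (c s)⁻¹|) ≤ ∫ s in x..x₀, M * (c s)⁻¹ := by
    apply intervalIntegral.integral_mono_on hxx₀ _ (hintcinv.const_mul M) hbound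
    apply ContinuousOn.intervalIntegrable
    rw [huIcc0]
    exact ((continuousOn_const.sub hwcont).mul hcinv).abs
  have hfin : (∫ s in x..x₀, M * (c s)⁻¹) = M * ∫ s in x..x₀, (c s)⁻¹ :=
    intervalIntegral.integral_const_mul _ _
  calc |η x - η x₀ + c x₀ * deriv η x₀ * ∫ s in x..x₀, (c s)⁻¹|
      = |∫ s in x..x₀, (w x₀ - w s) * (c s)⁻¹| := by rw [hC']
    _ ≤ ∫ s in x..x₀, |(w x₀ - w s) * (c s)⁻¹| := habs
    _ ≤ ∫ s in x..x₀, M * (c s)⁻¹ := hmono2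
    _ = M * ∫ s in x..x₀, (c s)⁻¹ := hfin
    _ = γ * Real.sqrt I * Real.sqrt (x₀ - x) * ∫ s in x..x₀, (c s)⁻¹ := by rw [hMdef]
end

section
/- Assume c(0) = 0 and ∫₀¹ ν₊(x)² dx < ∞, where ν₊(x) = ∫ₓ¹ c(s)⁻¹ ds for x ∈ (0,1]. Then for every smooth compactly supported ψ : ℝ → ℝ: ν₊(x)·c(x)·ψ'(x) → 0 as x → 0⁺. -/
open MeasureTheory Filter Set Topology

private lemma tendsto_int_Ioc_aux {f : ℝ → ℝ} (hf : IntegrableOn f (Ioc 0 1)) :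
    Tendsto (fun x => ∫ t in Ioc 0 x, f t) (𝓝[>] (0:ℝ)) (𝓝 0) := by
  have hf' : IntegrableOn f (Icc 0 1) := by
    rwa [integrableOn_Icc_iff_integrableOn_Ioc]
  have h := intervalIntegral.continuousOn_primitive (a := 0) (b := 1) (μ := volume) hf'
  have h1 : Tendsto (fun x => ∫ t in Ioc 0 x, f t) (𝓝[Icc 0 1] 0)
      (𝓝 (∫ t in Ioc (0:ℝ) 0, f t)) := h 0 (by constructor <;> norm_num)
  simp only [Ioc_self, Measure.restrict_empty, integral_zero_measure] at h1
  refine h1.mono_left ?_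
  rw [← nhdsWithin_Ioc_eq_nhdsGT (zero_lt_one (α := ℝ))]
  exact nhdsWithin_mono _ Ioc_subset_Icc_self

/-- Paper: boundary-form computation in the proof of Proposition 3.1:
(ν₊·c·ψ')(0⁺) = 0 for ψ ∈ C_c^∞(ℝ), when c(0) = 0 and ν₊ ∈ L²(0,1). -/
theorem stmt_18 (c c' : ℝ → ℝ)
    (hc_cont : Continuous c)
    (hc_pos : ∀ x : ℝ, x ≠ 0 → 0 < c x)
    (hc0 : c 0 = 0)
    (hc' : ∀ x y : ℝ, x ≤ y → c y - c x = ∫ t in x..y, c' t)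
    (hc'_loc : ∀ a b : ℝ, a < b →
      MeasureTheory.IntegrableOn (fun t => (c' t) ^ 2) (Set.Ioc a b))
    (hν_L2 : MeasureTheory.IntegrableOn
      (fun x => (∫ s in x..1, (c s)⁻¹) ^ 2) (Set.Ioc 0 1)) :
    ∀ ψ : ℝ → ℝ, ContDiff ℝ (⊤ : ℕ∞) ψ → HasCompactSupport ψ →
      Filter.Tendsto (fun x => (∫ s in x..1, (c s)⁻¹) * c x * deriv ψ x)
        (nhdsWithin 0 (Set.Ioi 0)) (nhds 0) := by
  intro ψ hψ _
  set ν : ℝ → ℝ := fun x => ∫ s in x..1, (c s)⁻¹ with hνdef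
  have hdc : Continuous (deriv ψ) := hψ.continuous_deriv (by exact_mod_cast le_top)
  have hd : Tendsto (deriv ψ) (𝓝[>] (0:ℝ)) (𝓝 (deriv ψ 0)) :=
    (hdc.tendsto 0).mono_left nhdsWithin_le_nhds
  have hν_nonneg : ∀ z : ℝ, 0 < z → z ≤ 1 → 0 ≤ ν z := by
    intro z hz hz1
    refine intervalIntegral.integral_nonneg hz1 fun s hs => inv_nonneg.2 ?_
    exact (hc_pos s (ne_of_gt (lt_of_lt_of_le hz hs.1))).le
  have hcont : ∀ a b : ℝ, 0 < a → a ≤ b →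
      IntervalIntegrable (fun t => (c t)⁻¹) volume a b := by
    intro a b ha hab
    apply ContinuousOn.intervalIntegrable
    apply hc_cont.continuousOn.inv₀
    intro t ht
    rw [uIcc_of_le hab] at ht
    exact ne_of_gt (hc_pos t (ne_of_gt (lt_of_lt_of_le ha ht.1)))
  have hc'11 : IntegrableOn (fun t => (c' t) ^ 2) (Ioc (0:ℝ) 1) := hc'_loc 0 1 zero_lt_one
  have hg : Tendsto (fun x => Real.sqrt (∫ t in Ioc 0 x, (ν t) ^ 2) *
      Real.sqrt (∫ t in Ioc 0 x, (c' t) ^ 2)) (𝓝[>] (0:ℝ)) (𝓝 0) := by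
    have h1 := (Real.continuous_sqrt.tendsto 0).comp (tendsto_int_Ioc_aux hν_L2)
    have h2 := (Real.continuous_sqrt.tendsto 0).comp (tendsto_int_Ioc_aux hc'11)
    simpa [Function.comp] using h1.mul h2
  have hmain : Tendsto (fun x => ν x * c x) (𝓝[>] (0:ℝ)) (𝓝 0) := by
    apply tendsto_of_tendsto_of_tendsto_of_le_of_le' tendsto_const_nhds hg
    · filter_upwards [Ioo_mem_nhdsGT_of_mem (Set.left_mem_Ico.2 zero_lt_one)] with x hx
      exact mul_nonneg (hν_nonneg x hx.1 hx.2.le) (hc_pos x (ne_of_gt hx.1)).le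
    · filter_upwards [Ioo_mem_nhdsGT_of_mem (Set.left_mem_Ico.2 zero_lt_one)] with x hx
      have hx0 : (0:ℝ) < x := hx.1
      have hx1 : x < 1 := hx.2
      have hνx : 0 ≤ ν x := hν_nonneg x hx0 hx1.le
      haveI : IsFiniteMeasure (volume.restrict (Ioc (0:ℝ) x)) :=
        ⟨by rw [Measure.restrict_apply_univ]; exact measure_Ioc_lt_top⟩
      -- monotonicity of ν
      have hmono : ∀ s ∈ Ioc (0:ℝ) x, ν x ≤ ν s := by
        intro s hs
        have h1 := hcont s x hs.1 hs.2
        have h2 := hcont x 1 hx0 hx1.le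
        have hadd := intervalIntegral.integral_add_adjacent_intervals h1 h2
        have hpos : 0 ≤ ∫ t in s..x, (c t)⁻¹ :=
          intervalIntegral.integral_nonneg hs.2 fun u hu =>
            inv_nonneg.2 (hc_pos u (ne_of_gt (lt_of_lt_of_le hs.1 hu.1))).le
        simp only [hνdef]
        linarith
      -- x * (ν x)^2 ≤ ∫ ν²
      have hIν : x * (ν x) ^ 2 ≤ ∫ t in Ioc 0 x, (ν t) ^ 2 := by
        have hint : IntegrableOn (fun t => (ν t) ^ 2) (Ioc 0 x) :=
          hν_L2.mono_set (Ioc_subset_Ioc_right hx1.le)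
        have hm := setIntegral_mono_on (f := fun _ => (ν x) ^ 2)
          (integrableOn_const measure_Ioc_lt_top.ne) hint measurableSet_Ioc
          (fun s hs => pow_le_pow_left₀ hνx (hmono s hs) 2)
        rwa [setIntegral_const, Real.volume_real_Ioc_of_le hx0.le, smul_eq_mul, sub_zero] at hm
      have h2 : ν x * Real.sqrt x ≤ Real.sqrt (∫ t in Ioc 0 x, (ν t) ^ 2) := by
        have hs := Real.sqrt_le_sqrt hIν
        rwa [Real.sqrt_mul hx0.le, Real.sqrt_sq hνx, mul_comm] at hs
      -- c x ≤ √x * √(∫ c'²)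
      have hIc' : IntegrableOn (fun t => (c' t) ^ 2) (Ioc 0 x) := hc'_loc 0 x hx0
      have hd' : c x ≤ Real.sqrt x * Real.sqrt (∫ t in Ioc 0 x, (c' t) ^ 2) := by
        have hcx : c x = ∫ t in (0:ℝ)..x, c' t := by
          have h := hc' 0 x hx0.le; rw [hc0] at h; linarith
        by_cases hint : IntervalIntegrable c' volume 0 x
        · have hint' : IntegrableOn c' (Ioc 0 x) :=
            (intervalIntegrable_iff_integrableOn_Ioc_of_le hx0.le).1 hint
          have hmeas : AEStronglyMeasurable (fun t => |c' t|)
              (volume.restrict (Ioc 0 x)) := by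
            have hm := Real.continuous_sqrt.comp_aestronglyMeasurable
              hIc'.aestronglyMeasurable
            simpa [Real.sqrt_sq_eq_abs] using hm
          have hmem : MemLp (fun t => |c' t|) 2 (volume.restrict (Ioc 0 x)) := by
            rw [memLp_two_iff_integrable_sq hmeas]
            simp only [sq_abs]; exact hIc'
          have hCS := integral_mul_le_Lp_mul_Lq_of_nonneg
            (μ := volume.restrict (Ioc 0 x))
            (Real.HolderConjugate.two_two : Real.HolderConjugate 2 2)
            (ae_of_all _ fun t => abs_nonneg (c' t))
            (ae_of_all _ fun _ => zero_le_one)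
            (by rw [ENNReal.ofReal_ofNat]; exact hmem)
            (by rw [ENNReal.ofReal_ofNat]; exact memLp_const 1)
          simp only [mul_one, Real.rpow_two, sq_abs, one_pow] at hCS
          have hconst : ∫ (_ : ℝ) in Ioc (0:ℝ) x, (1:ℝ) = x := by
            rw [setIntegral_const, Real.volume_real_Ioc_of_le hx0.le, smul_eq_mul, sub_zero,
              mul_one]
          rw [hconst, ← Real.sqrt_eq_rpow, ← Real.sqrt_eq_rpow] at hCS
          calc c x = ∫ t in Ioc 0 x, c' t := by
                rw [hcx, intervalIntegral.integral_of_le hx0.le]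
            _ ≤ ∫ t in Ioc 0 x, |c' t| :=
                setIntegral_mono_on hint' hint'.abs measurableSet_Ioc
                  fun t _ => le_abs_self _
            _ ≤ Real.sqrt (∫ t in Ioc 0 x, (c' t) ^ 2) * Real.sqrt x := hCS
            _ = Real.sqrt x * Real.sqrt (∫ t in Ioc 0 x, (c' t) ^ 2) := mul_comm _ _
        · have : c x = 0 := by rw [hcx, intervalIntegral.integral_undef hint]
          rw [this]
          exact mul_nonneg (Real.sqrt_nonneg _) (Real.sqrt_nonneg _)
      calc ν x * c x
          ≤ ν x * (Real.sqrt x * Real.sqrt (∫ t in Ioc 0 x, (c' t) ^ 2)) :=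
            mul_le_mul_of_nonneg_left hd' hνx
        _ = (ν x * Real.sqrt x) * Real.sqrt (∫ t in Ioc 0 x, (c' t) ^ 2) := by ring
        _ ≤ Real.sqrt (∫ t in Ioc 0 x, (ν t) ^ 2) *
            Real.sqrt (∫ t in Ioc 0 x, (c' t) ^ 2) :=
            mul_le_mul_of_nonneg_right h2 (Real.sqrt_nonneg _)
  have := hmain.mul hd
  simpa using this
end
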